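/- arXiv:0810.4757 — 4 statements merged into one kernel-verified Lean document; each statement's English description precedes it below -/
import Mathlib

section
/- Let C be an additive category and D a full subcategory. Suppose X → M --g--> Y and X' → M' --g'--> Y' are almost D-split sequences in C such that both g and g' are right minimal morphisms. Then Y ≅ Y' if and only if the two sequences are isomorphic (i.e., there exist isomorphisms X ≅ X', M ≅ M', Y ≅ Y' commuting with the sequence maps). -/
open CategoryTheory Limits

universe v u u'

section Defs

variable {C : Type u} [Category.{v} C]

/-- `f` is a kernel of `g`. -/
def IsKernelOf [HasZeroMorphisms C] {X M Y : C} (f : X ⟶ M) (g : M ⟶ Y) : Prop :=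
  f ≫ g = 0 ∧ ∀ ⦃V : C⦄ (h : V ⟶ M), h ≫ g = 0 → ∃! h' : V ⟶ X, h' ≫ f = h

/-- `g` is a cokernel of `f`. -/
def IsCokernelOf [HasZeroMorphisms C] {X M Y : C} (f : X ⟶ M) (g : M ⟶ Y) : Prop :=
  f ≫ g = 0 ∧ ∀ ⦃V : C⦄ (h : M ⟶ V), f ≫ h = 0 → ∃! h' : Y ⟶ V, g ≫ h' = h

/-- `f : X ⟶ M` is a left `D`-approximation of `X`. -/
def IsLeftApprox (D : Set C) {X M : C} (f : X ⟶ M) : Prop :=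
  ∀ ⦃D' : C⦄, D' ∈ D → ∀ h : X ⟶ D', ∃ h' : M ⟶ D', f ≫ h' = h

/-- `g : M ⟶ Y` is a right `D`-approximation of `Y`. -/
def IsRightApprox (D : Set C) {M Y : C} (g : M ⟶ Y) : Prop :=
  ∀ ⦃D' : C⦄, D' ∈ D → ∀ h : D' ⟶ Y, ∃ h' : D' ⟶ M, h' ≫ g = h

/-- An almost `D`-split sequence `X --f--> M --g--> Y`. -/
structure IsAlmostDSplitSeq [HasZeroMorphisms C] (D : Set C) {X M Y : C}
    (f : X ⟶ M) (g : M ⟶ Y) : Prop where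
  mem : M ∈ D
  left : IsLeftApprox D f
  right : IsRightApprox D g
  ker : IsKernelOf f g
  coker : IsCokernelOf f g

/-- the additive closure `add M`: direct summands of finite direct sums of copies of `M`. -/
def addOf [HasZeroMorphisms C] [HasFiniteBiproducts C] (M : C) : Set C :=
  {X | ∃ (n : ℕ) (i : X ⟶ ⨁ (fun _ : Fin n => M)) (p : (⨁ (fun _ : Fin n => M)) ⟶ X),
    i ≫ p = 𝟙 X}

/-- `g : M ⟶ Y` is right minimal. -/
def RightMinimal {M Y : C} (g : M ⟶ Y) : Prop :=
  ∀ h : M ⟶ M, h ≫ g = g → IsIso h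

/-- `f : X ⟶ M` is left minimal. -/
def LeftMinimal {X M : C} (f : X ⟶ M) : Prop :=
  ∀ h : M ⟶ M, f ≫ h = f → IsIso h

/-- Two sequences `X → M → Y` and `X' → M' → Y'` are isomorphic. -/
def SeqIso {X M Y X' M' Y' : C} (f : X ⟶ M) (g : M ⟶ Y)
    (f' : X' ⟶ M') (g' : M' ⟶ Y') : Prop :=
  ∃ (a : X ≅ X') (b : M ≅ M') (c : Y ≅ Y'),
    f ≫ b.hom = a.hom ≫ f' ∧ g ≫ c.hom = b.hom ≫ g'

/-- An object is indecomposable. -/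
def Indec [HasZeroMorphisms C] (X : C) : Prop :=
  (𝟙 X ≠ 0) ∧ ∀ e : X ⟶ X, e ≫ e = e → e = 0 ∨ e = 𝟙 X

/-- `X` is a direct summand of `M`. -/
def IsSummand (X M : C) : Prop :=
  ∃ (s : X ⟶ M) (p : M ⟶ X), s ≫ p = 𝟙 X

end Defs

/-- Two rings are derived equivalent: there is a triangulated equivalence between the
derived categories of their module categories. -/
def DerivedEquivalent (Λ : Type u) (Γ : Type u') [Ring Λ] [Ring Γ] : Prop :=
  letI : HasDerivedCategory (ModuleCat.{u} Λ) := HasDerivedCategory.standard _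
  letI : HasDerivedCategory (ModuleCat.{u'} Γ) := HasDerivedCategory.standard _
  ∃ (e : DerivedCategory (ModuleCat.{u} Λ) ≌ DerivedCategory (ModuleCat.{u'} Γ))
    (h : e.functor.CommShift ℤ), letI := h; e.functor.IsTriangulated

section ModuleDefs

open CategoryTheory Limits

variable {A : Type u} [Ring A]

/-- An Auslander-Reiten (almost split) sequence `0 → X → M → Y → 0` in `A`-mod. -/
structure IsARSeq {X M Y : ModuleCat.{u} A} (f : X ⟶ M) (g : M ⟶ Y) : Prop where
  fgX : Module.Finite A X
  fgM : Module.Finite A M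
  fgY : Module.Finite A Y
  mono : Mono f
  epi : Epi g
  exact : LinearMap.range f.hom = LinearMap.ker g.hom
  nonsplit : ¬ ∃ s : Y ⟶ M, s ≫ g = 𝟙 Y
  indecX : Indec X
  indecY : Indec Y
  liftNonSplitEpi : ∀ ⦃V : ModuleCat.{u} A⦄ (h : V ⟶ Y), Module.Finite A V →
    (¬ ∃ s : Y ⟶ V, s ≫ h = 𝟙 Y) → ∃ t : V ⟶ M, t ≫ g = h
  extendNonSplitMono : ∀ ⦃V : ModuleCat.{u} A⦄ (h : X ⟶ V), Module.Finite A V →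
    (¬ ∃ r : V ⟶ X, h ≫ r = 𝟙 X) → ∃ t : M ⟶ V, f ≫ t = h

/-- vanishing of `Ext^i_A(X, Y)`. -/
def ExtVanish (X Y : ModuleCat.{u} A) (i : ℕ) : Prop :=
  letI : HasDerivedCategory (ModuleCat.{u} A) := HasDerivedCategory.standard _
  letI : HasExt (ModuleCat.{u} A) := hasExt_of_hasDerivedCategory _
  Subsingleton (Abelian.Ext X Y i)

/-- `T` is a tilting `A`-module of projective dimension at most `n`. -/
structure IsTiltingModule (n : ℕ) (T : ModuleCat.{u} A) : Prop where
  fg : Module.Finite A T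
  resolution : ∃ (P : ℕ → ModuleCat.{u} A) (d : ∀ i, P (i + 1) ⟶ P i) (ε : P 0 ⟶ T),
    (∀ i, Projective (P i)) ∧ (∀ i, Module.Finite A (P i)) ∧
    (∀ i, n ≤ i → IsZero (P (i + 1))) ∧
    Epi ε ∧ LinearMap.range (d 0).hom = LinearMap.ker ε.hom ∧
    (∀ i, LinearMap.range (d (i + 1)).hom = LinearMap.ker (d i).hom)
  ext_vanish : ∀ i : ℕ, 0 < i → ExtVanish T T i
  coresolution : ∃ (m : ℕ) (Q : ℕ → ModuleCat.{u} A) (δ : ∀ i, Q i ⟶ Q (i + 1))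
    (η : ModuleCat.of A A ⟶ Q 0),
    (∀ i, Q i ∈ addOf T) ∧ (∀ i, m ≤ i → IsZero (Q (i + 1))) ∧
    Mono η ∧ LinearMap.range η.hom = LinearMap.ker (δ 0).hom ∧
    (∀ i, LinearMap.range (δ i).hom = LinearMap.ker (δ (i + 1)).hom)

/-- a morphism factors through a projective module. -/
def FactorsThroughProj {U V : ModuleCat.{u} A} (h : U ⟶ V) : Prop :=
  ∃ (P : ModuleCat.{u} A) (u : U ⟶ P) (v : P ⟶ V), Projective P ∧ u ≫ v = h

end ModuleDefs

/-- the stable endomorphism ring of a module. -/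
def StableEnd {A : Type u} [Ring A] (U : ModuleCat.{u} A) : Type _ :=
  RingQuot (fun a b : CategoryTheory.End U => FactorsThroughProj a ∧ b = 0)

noncomputable instance {A : Type u} [Ring A] (U : ModuleCat.{u} A) : Ring (StableEnd U) :=
  inferInstanceAs (Ring (RingQuot _))

/-- Morita equivalence of rings. -/
def MoritaEq (Λ : Type u) (Γ : Type u') [Ring Λ] [Ring Γ] : Prop :=
  Nonempty (ModuleCat.{u} Λ ≌ ModuleCat.{u'} Γ)

/-- two rings are derived equivalent via a tilting module of projective dimension at most `n`:
the second is the endomorphism ring of a tilting module of projective dimension `≤ n`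
over the first. -/
def DerivedEqViaTilting (n : ℕ) (Λ : Type u) (Γ : Type u') [Ring Λ] [Ring Γ] : Prop :=
  ∃ T : ModuleCat.{u} Λ, IsTiltingModule n T ∧ Nonempty (Module.End Λ T ≃+* Γ)


open CategoryTheory Limits in
/-- Two almost `D`-split sequences with right minimal right maps are isomorphic
iff their right end terms are isomorphic. -/
theorem almostSplit_rightMinimal_iso {C : Type u} [Category.{v} C] [Preadditive C]
    [HasFiniteBiproducts C] (D : Set C) {X M Y X' M' Y' : C}
    (f : X ⟶ M) (g : M ⟶ Y) (f' : X' ⟶ M') (g' : M' ⟶ Y')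
    (h : IsAlmostDSplitSeq D f g) (h' : IsAlmostDSplitSeq D f' g')
    (hg : RightMinimal g) (hg' : RightMinimal g') :
    Nonempty (Y ≅ Y') ↔ SeqIso f g f' g' := by
  constructor
  · rintro ⟨c⟩
    obtain ⟨b, hb⟩ := h'.right h.mem (g ≫ c.hom)
    obtain ⟨b', hb'⟩ := h.right h'.mem (g' ≫ c.inv)
    have hbb' : (b ≫ b') ≫ g = g := by
      rw [Category.assoc, hb', ← Category.assoc, hb, Category.assoc, c.hom_inv_id,
        Category.comp_id]
    have hb'b : (b' ≫ b) ≫ g' = g' := by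
      rw [Category.assoc, hb, ← Category.assoc, hb', Category.assoc, c.inv_hom_id,
        Category.comp_id]
    have i1 : IsIso (b ≫ b') := hg _ hbb'
    have i2 : IsIso (b' ≫ b) := hg' _ hb'b
    have hr : b ≫ (b' ≫ inv (b ≫ b')) = 𝟙 M := by
      rw [← Category.assoc, IsIso.hom_inv_id]
    have hl : (inv (b' ≫ b) ≫ b') ≫ b = 𝟙 M' := by
      rw [Category.assoc, IsIso.inv_hom_id]
    have hrl : b' ≫ inv (b ≫ b') = inv (b' ≫ b) ≫ b' := by
      calc b' ≫ inv (b ≫ b') = ((inv (b' ≫ b) ≫ b') ≫ b) ≫ (b' ≫ inv (b ≫ b')) := by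
            rw [hl, Category.id_comp]
        _ = (inv (b' ≫ b) ≫ b') ≫ (b ≫ (b' ≫ inv (b ≫ b'))) := by
            simp only [Category.assoc]
        _ = inv (b' ≫ b) ≫ b' := by rw [hr, Category.comp_id]
    haveI hbiso : IsIso b := ⟨b' ≫ inv (b ≫ b'), hr, by rw [hrl]; exact hl⟩
    have hinvb : inv b ≫ g = g' ≫ c.inv := by
      rw [IsIso.inv_comp_eq, ← Category.assoc, hb, Category.assoc, c.hom_inv_id,
        Category.comp_id]
    obtain ⟨a, ha, -⟩ := h'.ker.2 (f ≫ b)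
      (by rw [Category.assoc, hb, ← Category.assoc, h.ker.1, zero_comp])
    obtain ⟨a', ha', -⟩ := h.ker.2 (f' ≫ inv b)
      (by rw [Category.assoc, hinvb, ← Category.assoc, h'.ker.1, zero_comp])
    obtain ⟨w, -, huniq⟩ := h.ker.2 f h.ker.1
    obtain ⟨w', -, huniq'⟩ := h'.ker.2 f' h'.ker.1
    have haa' : a ≫ a' = 𝟙 X := by
      have h1 : (a ≫ a') ≫ f = f := by
        rw [Category.assoc, ha', ← Category.assoc, ha, Category.assoc, IsIso.hom_inv_id,
          Category.comp_id]
      exact (huniq _ h1).trans (huniq _ (Category.id_comp f)).symm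
    have ha'a : a' ≫ a = 𝟙 X' := by
      have h1 : (a' ≫ a) ≫ f' = f' := by
        rw [Category.assoc, ha, ← Category.assoc, ha', Category.assoc, IsIso.inv_hom_id,
          Category.comp_id]
      exact (huniq' _ h1).trans (huniq' _ (Category.id_comp f')).symm
    exact ⟨⟨a, a', haa', ha'a⟩, asIso b, c, ha.symm, hb.symm⟩
  · rintro ⟨a, b, c, -, -⟩
    exact ⟨c⟩
end

section
/- Let C be an additive category and D a full subcategory. Suppose X --f--> M → Y and X' --f'--> M' → Y' are almost D-split sequences in C such that both f and f' are left minimal. Then X ≅ X' if and only if the two sequences are isomorphic. -/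
open CategoryTheory Limits

universe v u u'

open CategoryTheory Limits in
/-- Two almost `D`-split sequences with left minimal left maps are isomorphic
iff their left end terms are isomorphic. -/
theorem almostSplit_leftMinimal_iso {C : Type u} [Category.{v} C] [Preadditive C]
    [HasFiniteBiproducts C] (D : Set C) {X M Y X' M' Y' : C}
    (f : X ⟶ M) (g : M ⟶ Y) (f' : X' ⟶ M') (g' : M' ⟶ Y')
    (h : IsAlmostDSplitSeq D f g) (h' : IsAlmostDSplitSeq D f' g')
    (hf : LeftMinimal f) (hf' : LeftMinimal f') :
    Nonempty (X ≅ X') ↔ SeqIso f g f' g' := by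
  constructor
  · rintro ⟨a⟩
    obtain ⟨b, hb⟩ := h.left h'.mem (a.hom ≫ f')
    obtain ⟨b', hb'⟩ := h'.left h.mem (a.inv ≫ f)
    have hbb' : f ≫ (b ≫ b') = f := by
      rw [← Category.assoc, hb, Category.assoc, hb', ← Category.assoc,
        a.hom_inv_id, Category.id_comp]
    have hb'b : f' ≫ (b' ≫ b) = f' := by
      rw [← Category.assoc, hb', Category.assoc, hb, ← Category.assoc,
        a.inv_hom_id, Category.id_comp]
    have e1 : IsIso (b ≫ b') := hf _ hbb'
    have e2 : IsIso (b' ≫ b) := hf' _ hb'b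
    have hbiso : IsIso b := by
      have hl : (inv (b' ≫ b) ≫ b') ≫ b = 𝟙 M' := by
        rw [Category.assoc, IsIso.inv_hom_id]
      have hr : b ≫ b' ≫ inv (b ≫ b') = 𝟙 M := by
        rw [← Category.assoc, IsIso.hom_inv_id]
      have heq : b' ≫ inv (b ≫ b') = inv (b' ≫ b) ≫ b' := by
        have h2 := congrArg (fun t => t ≫ (b' ≫ inv (b ≫ b'))) hl
        simp only [Category.assoc, hr, Category.id_comp, Category.comp_id] at h2; exact h2.symm
      exact ⟨b' ≫ inv (b ≫ b'), hr, by rw [heq, hl]⟩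
    have hf'eq : f' = a.inv ≫ f ≫ b := by
      rw [hb, ← Category.assoc, a.inv_hom_id, Category.id_comp]
    have hbg0 : f ≫ (b ≫ g') = 0 := by
      rw [← Category.assoc, hb, Category.assoc, h'.coker.1]
      simp
    obtain ⟨c, hc, hcu⟩ := h.coker.2 _ hbg0
    have hbg0' : f' ≫ (inv b ≫ g) = 0 := by
      simp [hf'eq, h.coker.1]
    obtain ⟨c', hc', hcu'⟩ := h'.coker.2 _ hbg0'
    have hcc' : c ≫ c' = 𝟙 Y := by
      obtain ⟨u, -, hu⟩ := h.coker.2 g h.coker.1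
      have e3 : c ≫ c' = u := hu _ (by
        show g ≫ (c ≫ c') = g
        rw [← Category.assoc, hc, Category.assoc, hc']; simp)
      have e4 : (𝟙 Y) = u := hu _ (Category.comp_id g)
      rw [e3, ← e4]
    have hc'c : c' ≫ c = 𝟙 Y' := by
      obtain ⟨u, -, hu⟩ := h'.coker.2 g' h'.coker.1
      have e3 : c' ≫ c = u := hu _ (by
        show g' ≫ (c' ≫ c) = g'
        rw [← Category.assoc, hc', Category.assoc, hc]; simp)
      have e4 : (𝟙 Y') = u := hu _ (Category.comp_id g')
      rw [e3, ← e4]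
    exact ⟨a, asIso b, ⟨c, c', hcc', hc'c⟩, by simpa using hb, by simpa using hc⟩
  · rintro ⟨a, -, -, -, -⟩
    exact ⟨a⟩
end

section
/- Let A be a ring with identity and D a covariantly finite full subcategory of A-Mod. Let Y(D) = {X : Ext¹_A(D, X) = 0 for all D ∈ D}. Then for any A-module X that is cogenerated by D (admits a monomorphism into an object of D) and lies in Y(D), there is a short exact sequence 0 → X → D₀ → Y → 0 with D₀ ∈ D which is an almost D-split sequence. -/
open CategoryTheory Limits

universe v u u'

section AuxLift

open CategoryTheory Limits Abelian DerivedCategory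

variable {C : Type u} [Category.{v} C] [Abelian C] [HasDerivedCategory.{w} C]

/-- The natural isomorphism `singleFunctor C 0 ⋙ homologyFunctor C 0 ≅ 𝟭 C`. -/
noncomputable def singleCompHomologyZeroIso :
    DerivedCategory.singleFunctor C 0 ⋙ DerivedCategory.homologyFunctor C 0 ≅ 𝟭 C := by
  refine ?_ ≪≫ Functor.isoWhiskerRight
      (Iso.mk ((singleFunctorsPostcompQIso C).hom.hom 0)
        ((singleFunctorsPostcompQIso C).inv.hom 0) ?_ ?_)
      (DerivedCategory.homologyFunctor C 0) ≪≫ Functor.associator _ _ _ ≪≫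
    Functor.isoWhiskerLeft (HomologicalComplex.single C (ComplexShape.up ℤ) 0)
      (DerivedCategory.homologyFunctorFactors C 0) ≪≫
    HomologicalComplex.homologyFunctorSingleIso C (ComplexShape.up ℤ) 0
  · exact Iso.refl _
  · rw [singleFunctorsPostcompQIso_hom_hom, singleFunctorsPostcompQIso_inv_hom]
    exact Category.comp_id _
  · rw [singleFunctorsPostcompQIso_hom_hom, singleFunctorsPostcompQIso_inv_hom]
    exact Category.comp_id _

omit [HasDerivedCategory.{w} C] in
/-- If `Ext¹(W, S.X₁)` vanishes, then any map `W ⟶ S.X₃` lifts along `S.g`. -/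
lemma surj_of_ext_one_subsingleton [HasExt.{w'} C]
    {S : ShortComplex C} (hS : S.ShortExact) (W : C)
    (hvan : Subsingleton (Abelian.Ext W S.X₁ 1)) (h : W ⟶ S.X₃) :
    ∃ t : W ⟶ S.X₂, t ≫ S.g = h := by
  obtain ⟨x₂, hx₂⟩ := Ext.covariant_sequence_exact₃ W hS (Ext.mk₀ h) rfl
    (Subsingleton.elim _ _)
  letI := HasDerivedCategory.standard C
  set F := DerivedCategory.singleFunctor C 0 with hF
  set H := DerivedCategory.homologyFunctor C 0 with hH
  have key : x₂.hom ≫ (F.map S.g)⟦((0 : ℕ) : ℤ)⟧' = (Ext.mk₀ h).hom := by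
    rw [Ext.hom_comp_singleFunctor_map_shift, hx₂]
  set z := shiftFunctorZero' (DerivedCategory C) ((0 : ℕ) : ℤ) (by simp) with hz
  set e' : F.obj W ⟶ F.obj S.X₂ := x₂.hom ≫ z.hom.app (F.obj S.X₂) with he'
  have he : e' ≫ F.map S.g = F.map h := by
    have hnat := z.hom.naturality (F.map S.g)
    rw [Functor.id_map] at hnat
    rw [he', Category.assoc, ← hnat, ← Category.assoc, key, Ext.mk₀_hom]
    dsimp [ShiftedHom.mk₀]
    rw [Category.assoc]
    conv_lhs => rw [show z.hom.app (F.obj S.X₃) =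
      (shiftFunctorZero' (DerivedCategory C) 0 rfl).hom.app (F.obj S.X₃) from rfl]
    rw [Iso.inv_hom_id_app]
    simp [hF]
    rfl
  set ε := singleCompHomologyZeroIso (C := C)
  refine ⟨ε.inv.app W ≫ H.map e' ≫ ε.hom.app S.X₂, ?_⟩
  have n₂ := ε.hom.naturality S.g
  have n₁ := ε.hom.naturality h
  dsimp at n₂ n₁
  rw [Category.assoc, Category.assoc, ← n₂, ← Category.assoc (H.map e'),
    ← H.map_comp, he, n₁]
  simp

end AuxLift

open CategoryTheory Limits in
/-- If `D` is covariantly finite in `A`-Mod, then every module `X` cogenerated by `D`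
with `Ext¹(D, X) = 0` sits in an almost `D`-split short exact sequence `0 → X → D₀ → Y → 0`. -/
theorem exists_almostSplit_of_covariantlyFinite {A : Type u} [Ring A]
    (D : Set (ModuleCat.{u} A))
    (hD : ∀ X : ModuleCat.{u} A, ∃ (M : ModuleCat.{u} A) (f : X ⟶ M), M ∈ D ∧ IsLeftApprox D f)
    (X : ModuleCat.{u} A)
    (hcogen : ∃ (D₀ : ModuleCat.{u} A) (m : X ⟶ D₀), D₀ ∈ D ∧ Mono m)
    (hext : ∀ W ∈ D, ExtVanish W X 1) :
    ∃ (D₀ Y : ModuleCat.{u} A) (f : X ⟶ D₀) (g : D₀ ⟶ Y),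
      Mono f ∧ Epi g ∧ IsAlmostDSplitSeq D f g := by
  obtain ⟨M, f, hM, hf⟩ := hD X
  obtain ⟨D₀', m, hD₀', hm⟩ := hcogen
  -- `f` is a monomorphism since the mono `m` factors through it
  obtain ⟨t, ht⟩ := hf hD₀' m
  have hfmono : Mono f := by
    have := hm
    rw [← ht] at this
    exact mono_of_mono f t
  set g := cokernel.π f with hg
  have hfg : f ≫ g = 0 := cokernel.condition f
  set S : ShortComplex (ModuleCat.{u} A) := ShortComplex.mk f g hfg with hS
  have hSE : S.ShortExact :=
    { exact := S.exact_of_g_is_cokernel (cokernelIsCokernel f)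
      mono_f := hfmono
      epi_g := coequalizer.π_epi }
  -- `f` is the kernel of `g`
  have hker : IsKernelOf f g := by
    refine ⟨hfg, fun V h hh => ?_⟩
    obtain ⟨l, hl⟩ := KernelFork.IsLimit.lift'
      (Abelian.monoIsKernelOfCokernel _ (cokernelIsCokernel f)) h hh
    simp only [Fork.ι_ofι] at hl
    exact ⟨l, hl, fun y hy => by rw [← cancel_mono f, hy, hl]⟩
  have hcoker : IsCokernelOf f g := by
    refine ⟨hfg, fun V h hh => ?_⟩
    refine ⟨cokernel.desc f h hh, cokernel.π_desc f h hh, fun y hy => ?_⟩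
    have : Epi g := coequalizer.π_epi
    rw [← cancel_epi g, hy, cokernel.π_desc]
  -- right approximation property via Ext vanishing
  have hright : IsRightApprox D g := by
    intro D' hD' h
    letI := HasDerivedCategory.standard (ModuleCat.{u} A)
    letI := hasExt_of_hasDerivedCategory (ModuleCat.{u} A)
    exact surj_of_ext_one_subsingleton hSE D' (hext D' hD') h
  exact ⟨M, cokernel f, f, g, hfmono, coequalizer.π_epi,
    { mem := hM, left := hf, right := hright, ker := hker, coker := hcoker }⟩
end

section
/- Let A be an Artin algebra and 0 → X_i → M_i → X_{i-1} → 0 Auslander-Reiten sequences in A-mod for i = 1, …, n; set M = ⊕_{i=1}^n M_i. If X_n ∈ add(M), then X_0 ∈ add(M) and consequently add(M ⊕ X_n) = add(M) = add(M ⊕ X_0), so End_A(M ⊕ X_n) and End_A(M ⊕ X_0) are Morita equivalent. -/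
open CategoryTheory Limits

universe v u u'

section Akizuki

variable {R : Type u} [CommRing R]

private def submoduleUnrestrict {S : Type u'} [Ring S] {Q : Type v} [AddCommGroup Q]
    [Module R Q] [Module S Q] (π : R →+* S) (hπ : Function.Surjective π)
    (hc : ∀ (r : R) (x : Q), (π r) • x = r • x) (P : Submodule R Q) : Submodule S Q where
  carrier := P
  add_mem' := fun ha hb => P.add_mem ha hb
  zero_mem' := P.zero_mem
  smul_mem' := fun s x hx => by
    obtain ⟨r, rfl⟩ := hπ s
    rw [hc]
    exact P.smul_mem r hx

private lemma isNoetherian_of_compat_surjective {S : Type u'} [Ring S] {Q : Type v}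
    [AddCommGroup Q] [Module R Q] [Module S Q] (π : R →+* S) (hπ : Function.Surjective π)
    (hc : ∀ (r : R) (x : Q), (π r) • x = r • x) (h : IsNoetherian S Q) : IsNoetherian R Q := by
  rw [isNoetherian_iff] at h ⊢
  refine Subrelation.wf ?_ (InvImage.wf (submoduleUnrestrict π hπ hc) h)
  intro P1 P2 hlt
  have hmono : ∀ P P' : Submodule R Q, P ≤ P' →
      submoduleUnrestrict π hπ hc P ≤ submoduleUnrestrict π hπ hc P' := fun _ _ hle _ hx => hle hx
  have hcar : ∀ P : Submodule R Q, (submoduleUnrestrict π hπ hc P : Set Q) = P := fun _ => rfl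
  have hne : submoduleUnrestrict π hπ hc P2 ≠ submoduleUnrestrict π hπ hc P1 := by
    intro hEq
    exact hlt.ne (SetLike.ext' (by rw [← hcar P2, ← hcar P1, hEq]))
  exact lt_of_le_of_ne (hmono _ _ hlt.le) hne

private lemma isNoetherian_of_isArtinian_aux [IsArtinianRing R] (k : ℕ) :
    ∀ (M : Type u) [AddCommGroup M] [Module R M] [IsArtinian R M],
    ((⊥ : Ideal R).jacobson ^ k) • (⊤ : Submodule R M) = ⊥ → IsNoetherian R M := by
  induction k with
  | zero =>
    intro M _ _ _ h
    rw [pow_zero, one_smul] at h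
    have hsub : Subsingleton M := by
      constructor
      intro a b
      have ha : a ∈ (⊥ : Submodule R M) := h ▸ Submodule.mem_top
      have hb : b ∈ (⊥ : Submodule R M) := h ▸ Submodule.mem_top
      rw [Submodule.mem_bot] at ha hb
      rw [ha, hb]
    exact isNoetherian_def.mpr fun s => by
      rw [Subsingleton.elim s ⊥]; exact Submodule.fg_bot
  | succ k ih =>
    intro M _ _ _ h
    set J := (⊥ : Ideal R).jacobson with hJdef
    set N := J • (⊤ : Submodule R M) with hNdef
    have hN : IsNoetherian R N := by
      apply ih
      have hmap : Submodule.map N.subtype ((J ^ k) • (⊤ : Submodule R N)) = ⊥ := by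
        rw [Submodule.map_smul'', Submodule.map_top, Submodule.range_subtype, hNdef, ← mul_smul,
          ← pow_succ]
        exact h
      have hinj := Submodule.map_injective_of_injective (N.injective_subtype)
      apply hinj
      rw [hmap, Submodule.map_bot]
    have hQ : IsNoetherian R (M ⧸ N) := by
      letI : Module (R ⧸ J) (M ⧸ N) :=
        inferInstanceAs (Module (R ⧸ J) (M ⧸ J • (⊤ : Submodule R M)))
      have hcompat : ∀ (r : R) (x : M ⧸ N), (Ideal.Quotient.mk J r) • x = r • x := fun r x =>
        Module.IsTorsionBySet.mk_smul (Module.isTorsionBySet_quotient_ideal_smul M J) r x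
      haveI : IsScalarTower R (R ⧸ J) (M ⧸ N) :=
        Module.IsTorsionBySet.isScalarTower (Module.isTorsionBySet_quotient_ideal_smul M J)
      haveI : IsArtinianRing (R ⧸ J) := (Ideal.Quotient.mk J).surjective.isArtinianRing
      haveI : IsSemisimpleRing (R ⧸ J) := by
        have hnil : J = nilradical R := by
          rw [hJdef, nilradical_eq_sInf]
          unfold Ideal.jacobson
          apply congrArg sInf
          ext p
          simp only [Set.mem_setOf_eq, bot_le, true_and]
          exact ⟨fun hm => hm.isPrime, fun hp => (IsArtinianRing.isPrime_iff_isMaximal p).mp hp⟩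
        rw [hnil]
        haveI : IsReduced (R ⧸ nilradical R) := by
          constructor
          intro x hx
          obtain ⟨r, rfl⟩ := Ideal.Quotient.mk_surjective x
          obtain ⟨n, hn⟩ := hx
          rw [← map_pow, Ideal.Quotient.eq_zero_iff_mem, mem_nilradical] at hn
          obtain ⟨m, hm⟩ := hn
          rw [Ideal.Quotient.eq_zero_iff_mem, mem_nilradical]
          exact ⟨n * m, by rw [pow_mul]; exact hm⟩
        exact IsArtinianRing.isSemisimpleRing_of_isReduced _
      haveI hartR : IsArtinian R (M ⧸ N) := inferInstance
      haveI hartQ : IsArtinian (R ⧸ J) (M ⧸ N) := isArtinian_of_tower R hartR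
      have hnoethQ : IsNoetherian (R ⧸ J) (M ⧸ N) :=
        (IsSemisimpleModule.finite_tfae.out 2 1).mp hartQ
      exact isNoetherian_of_compat_surjective (Ideal.Quotient.mk J)
        Ideal.Quotient.mk_surjective hcompat hnoethQ
    exact (isNoetherian_iff_submodule_quotient N).mpr ⟨hN, hQ⟩

/-- Akizuki / Hopkins: an artinian module over a commutative artinian ring is noetherian. -/
lemma isNoetherian_of_isArtinian' [IsArtinianRing R] (M : Type u) [AddCommGroup M] [Module R M]
    [IsArtinian R M] : IsNoetherian R M := by
  obtain ⟨n, hn⟩ := IsArtinianRing.isNilpotent_jacobson_bot (R := R)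
  rw [Submodule.zero_eq_bot] at hn
  exact isNoetherian_of_isArtinian_aux n M (by rw [hn, Submodule.bot_smul])

end Akizuki
/-! ### addOf lemmas -/

section AddOfLemmas

variable {C : Type u} [Category.{v} C] [Preadditive C] [HasFiniteBiproducts C]

lemma mem_addOf_of_sum {M X : C} {κ : Type} [Fintype κ] (a : κ → (X ⟶ M)) (b : κ → (M ⟶ X))
    (h : ∑ t, a t ≫ b t = 𝟙 X) : X ∈ addOf M := by
  classical
  let e := Fintype.equivFin κ
  refine ⟨Fintype.card κ, biproduct.lift (fun j => a (e.symm j)),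
    biproduct.desc (fun j => b (e.symm j)), ?_⟩
  rw [biproduct.lift_desc, ← h]
  exact Equiv.sum_comp e.symm (fun t => a t ≫ b t)

lemma sum_of_mem_addOf {M X : C} (h : X ∈ addOf M) :
    ∃ (k : ℕ) (a : Fin k → (X ⟶ M)) (b : Fin k → (M ⟶ X)), ∑ t, a t ≫ b t = 𝟙 X := by
  obtain ⟨k, i, p, hip⟩ := h
  refine ⟨k, fun j => i ≫ biproduct.π _ j, fun j => biproduct.ι (fun _ : Fin k => M) j ≫ p, ?_⟩
  have h1 : ∑ j : Fin k, (i ≫ biproduct.π (fun _ : Fin k => M) j) ≫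
        (biproduct.ι (fun _ : Fin k => M) j ≫ p)
      = i ≫ (∑ j : Fin k, biproduct.π (fun _ : Fin k => M) j ≫
        biproduct.ι (fun _ : Fin k => M) j) ≫ p := by
    rw [Preadditive.sum_comp, Preadditive.comp_sum]
    simp [Category.assoc]
  rw [h1, biproduct.total, Category.id_comp, hip]

lemma mem_addOf_self (M : C) : M ∈ addOf M :=
  mem_addOf_of_sum (κ := PUnit) (fun _ => 𝟙 M) (fun _ => 𝟙 M) (by simp)

lemma addOf_trans {M X Y : C} (hXY : X ∈ addOf Y) (hYM : Y ∈ addOf M) : X ∈ addOf M := by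
  obtain ⟨k, a, b, hab⟩ := sum_of_mem_addOf hXY
  obtain ⟨l, c, d, hcd⟩ := sum_of_mem_addOf hYM
  refine mem_addOf_of_sum (κ := Fin k × Fin l) (fun t => a t.1 ≫ c t.2)
    (fun t => d t.2 ≫ b t.1) ?_
  rw [Fintype.sum_prod_type]
  have h1 : ∀ t1 : Fin k, ∑ t2 : Fin l, (a t1 ≫ c t2) ≫ (d t2 ≫ b t1)
      = a t1 ≫ (∑ t2 : Fin l, c t2 ≫ d t2) ≫ b t1 := by
    intro t1
    rw [Preadditive.sum_comp, Preadditive.comp_sum]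
    simp [Category.assoc]
  calc ∑ t1, ∑ t2, (a t1 ≫ c t2) ≫ (d t2 ≫ b t1)
      = ∑ t1, a t1 ≫ (∑ t2 : Fin l, c t2 ≫ d t2) ≫ b t1 := by
        exact Finset.sum_congr rfl (fun t1 _ => h1 t1)
    _ = ∑ t1, a t1 ≫ b t1 := by rw [hcd]; simp
    _ = 𝟙 X := hab

lemma summand_mem_addOf {M X Y : C} (hs : IsSummand X Y) (hY : Y ∈ addOf M) : X ∈ addOf M := by
  obtain ⟨s, p, hsp⟩ := hs
  exact addOf_trans (mem_addOf_of_sum (κ := PUnit) (fun _ => s) (fun _ => p) (by simpa)) hY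

lemma biprod_mem_addOf [HasBinaryBiproducts C] {M X Y : C} (hX : X ∈ addOf M)
    (hY : Y ∈ addOf M) : (X ⊞ Y) ∈ addOf M := by
  obtain ⟨k, a, b, hab⟩ := sum_of_mem_addOf hX
  obtain ⟨l, c, d, hcd⟩ := sum_of_mem_addOf hY
  refine mem_addOf_of_sum (κ := Fin k ⊕ Fin l)
    (Sum.elim (fun t => biprod.fst ≫ a t) (fun t => biprod.snd ≫ c t))
    (Sum.elim (fun t => b t ≫ biprod.inl) (fun t => d t ≫ biprod.inr)) ?_
  rw [Fintype.sum_sum_type]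
  have h1 : ∑ t : Fin k, (biprod.fst ≫ a t) ≫ (b t ≫ biprod.inl)
      = (biprod.fst : ((X ⊞ Y) ⟶ X)) ≫ (∑ t, a t ≫ b t) ≫ (biprod.inl : (X ⟶ (X ⊞ Y))) := by
    rw [Preadditive.sum_comp, Preadditive.comp_sum]; simp [Category.assoc]
  have h2 : ∑ t : Fin l, (biprod.snd ≫ c t) ≫ (d t ≫ biprod.inr)
      = (biprod.snd : ((X ⊞ Y) ⟶ Y)) ≫ (∑ t, c t ≫ d t) ≫ (biprod.inr : (Y ⟶ (X ⊞ Y))) := by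
    rw [Preadditive.sum_comp, Preadditive.comp_sum]; simp [Category.assoc]
  simp only [Sum.elim_inl, Sum.elim_inr]
  rw [h1, h2, hab, hcd, Category.id_comp, Category.id_comp, biprod.total]

lemma biprod_fst_summand [HasBinaryBiproducts C] (X Y : C) : IsSummand X (X ⊞ Y) :=
  ⟨biprod.inl, biprod.fst, biprod.inl_fst⟩

lemma biprod_snd_summand [HasBinaryBiproducts C] (X Y : C) : IsSummand Y (X ⊞ Y) :=
  ⟨biprod.inr, biprod.snd, biprod.inr_snd⟩

lemma summand_biproduct {n : ℕ} (Ms : Fin n → C) (j : Fin n) : IsSummand (Ms j) (⨁ Ms) :=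
  ⟨biproduct.ι _ j, biproduct.π _ j, biproduct.ι_π_self _ _⟩

lemma addOf_eq_of_mutual {U W : C} (h1 : U ∈ addOf W) (h2 : W ∈ addOf U) :
    addOf U = addOf W :=
  Set.ext fun _ => ⟨fun hT => addOf_trans hT h1, fun hT => addOf_trans hT h2⟩

lemma addOf_biprod_eq [HasBinaryBiproducts C] {B Y : C} (h : Y ∈ addOf B) :
    addOf (B ⊞ Y) = addOf B :=
  addOf_eq_of_mutual (biprod_mem_addOf (mem_addOf_self B) h)
    (summand_mem_addOf (biprod_fst_summand B Y) (mem_addOf_self (B ⊞ Y)))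

end AddOfLemmas


section Fitting

variable {A : Type u} [Ring A]

/-- an endomorphism, seen in the endomorphism monoid of the category -/
def endOf {Z : ModuleCat.{u} A} (e : Z ⟶ Z) : End Z := e

/-- an endomorphism, seen as a linear endomorphism -/
def linOf {Z : ModuleCat.{u} A} (e : Z ⟶ Z) : Module.End A Z := e.hom

/-- categorical power of an endomorphism -/
def catPow {Z : ModuleCat.{u} A} (e : Z ⟶ Z) : ℕ → (Z ⟶ Z)
  | 0 => 𝟙 Z
  | k + 1 => catPow e k ≫ e

lemma catPow_eq_endPow {Z : ModuleCat.{u} A} (e : Z ⟶ Z) (k : ℕ) :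
    catPow e k = endOf e ^ k := by
  induction k with
  | zero => rfl
  | succ k ih => rw [pow_succ'] ; show catPow e k ≫ e = _ ; rw [ih]; rfl

lemma catPow_eq_linPow {Z : ModuleCat.{u} A} (e : Z ⟶ Z) (k : ℕ) :
    (catPow e k).hom = linOf e ^ k := by
  induction k with
  | zero => rfl
  | succ k ih => rw [pow_succ'] ; show (catPow e k ≫ e).hom = _ ; rw [ModuleCat.hom_comp, ih]; rfl

lemma catPow_comm {Z : ModuleCat.{u} A} (e : Z ⟶ Z) (k : ℕ) :
    catPow e k ≫ e = e ≫ catPow e k := by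
  induction k with
  | zero => simp [catPow]
  | succ k ih =>
    calc (catPow e k ≫ e) ≫ e = (e ≫ catPow e k) ≫ e := by rw [ih]
      _ = e ≫ catPow e k ≫ e := Category.assoc _ _ _

lemma isUnit_or_nilpotent {Z : ModuleCat.{u} A} (hart : IsArtinian A Z) (hnoe : IsNoetherian A Z)
    (hind : Indec Z) (e : Z ⟶ Z) :
    IsUnit (endOf e) ∨ IsNilpotent (endOf e) := by
  obtain ⟨n0, hn0⟩ := Filter.eventually_atTop.mp
    (LinearMap.eventually_isCompl_ker_pow_range_pow (linOf e))
  set k := n0 + 1 with hk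
  have hcompl : IsCompl (LinearMap.ker (linOf e ^ k)) (LinearMap.range (linOf e ^ k)) :=
    hn0 k (Nat.le_add_right _ _)
  set K := LinearMap.ker (linOf e ^ k) with hK
  set Rg := LinearMap.range (linOf e ^ k) with hRg
  let pr : Z ⟶ Z := ModuleCat.ofHom (Rg.subtype.comp (Submodule.projectionOnto Rg K hcompl.symm))
  have hprK : ∀ x ∈ K, pr x = 0 := fun x hx => by
    show (Rg.subtype (Submodule.projectionOnto Rg K hcompl.symm x)) = 0
    rw [Submodule.projectionOnto_apply_right hcompl.symm ⟨x, hx⟩]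
    rfl
  have hprRg : ∀ x ∈ Rg, pr x = x := fun x hx => by
    show (Rg.subtype (Submodule.projectionOnto Rg K hcompl.symm x)) = x
    rw [Submodule.projectionOnto_apply_left (h := hcompl.symm) ⟨x, hx⟩]
    rfl
  have hidem : pr ≫ pr = pr := by
    apply ModuleCat.hom_ext
    apply LinearMap.ext
    intro x
    show pr (pr x) = pr x
    exact hprRg _ (Submodule.coe_mem _)
  rcases hind.2 pr hidem with h0 | h1
  · -- pr = 0 : the range is trivial, so e is nilpotent
    right
    refine ⟨k, ?_⟩
    rw [← catPow_eq_endPow]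
    apply ModuleCat.hom_ext
    apply LinearMap.ext
    intro x
    have hx : catPow e k x ∈ Rg := by
      show (catPow e k).hom x ∈ Rg
      rw [catPow_eq_linPow]
      exact LinearMap.mem_range_self _ x
    have h2 := hprRg _ hx
    rw [h0] at h2
    exact h2.symm
  · -- pr = 𝟙 : e^k is bijective, hence e is an isomorphism
    left
    have hKbot : ∀ x ∈ K, x = 0 := fun x hx => by
      have h2 := hprK x hx
      rw [h1] at h2
      exact h2
    have hinj : Function.Injective (catPow e k) := by
      intro x y hxy
      have hmem : (linOf e ^ k) (x - y) = 0 := by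
        rw [map_sub]
        change (catPow e k).hom x = (catPow e k).hom y at hxy
        rw [catPow_eq_linPow] at hxy
        rw [hxy]; exact sub_self _
      exact sub_eq_zero.mp (hKbot _ hmem)
    have hsur : Function.Surjective (catPow e k) := by
      intro z
      have hz : pr z = z := by rw [h1]; rfl
      have hmem : z ∈ Rg := by
        rw [← hz]
        exact Submodule.coe_mem _
      obtain ⟨w, hw⟩ := hmem
      exact ⟨w, by show (catPow e k).hom w = z; rw [catPow_eq_linPow]; exact hw⟩
    have hek : catPow e k = e ≫ catPow e n0 := (catPow_comm e n0).symm ▸ rfl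
    have heinj : Function.Injective e := by
      intro x y hxy
      apply hinj
      show catPow e k x = catPow e k y
      rw [hek]
      show catPow e n0 (e x) = catPow e n0 (e y)
      rw [hxy]
    have hesur : Function.Surjective e := by
      intro z
      obtain ⟨w, hw⟩ := hsur z
      refine ⟨catPow e n0 w, ?_⟩
      have h5 : catPow e (n0 + 1) w = z := by rw [← hk]; exact hw
      show (catPow e n0 ≫ e) w = z
      exact h5
    let eq := LinearEquiv.ofBijective e.hom ⟨heinj, hesur⟩
    refine ⟨⟨endOf e, ModuleCat.ofHom eq.symm.toLinearMap, ?_, ?_⟩, rfl⟩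
    · show ModuleCat.ofHom eq.symm.toLinearMap ≫ e = 𝟙 Z
      apply ModuleCat.hom_ext
      apply LinearMap.ext
      intro x
      show e (eq.symm x) = x
      exact eq.apply_symm_apply x
    · show e ≫ ModuleCat.ofHom eq.symm.toLinearMap = 𝟙 Z
      apply ModuleCat.hom_ext
      apply LinearMap.ext
      intro x
      show eq.symm (e x) = x
      exact eq.symm_apply_apply x

lemma not_isUnit_add {Z : ModuleCat.{u} A} (hart : IsArtinian A Z) (hnoe : IsNoetherian A Z)
    (hind : Indec Z) {a b : End Z} (ha : ¬IsUnit a) (hb : ¬IsUnit b) : ¬IsUnit (a + b) := by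
  intro hu
  set u := hu.unit with hudef
  have hva : ¬IsUnit ((↑u⁻¹ : End Z) * a) := by
    intro hc
    apply ha
    have h2 : a = (↑u : End Z) * ((↑u⁻¹ : End Z) * a) := by
      rw [← mul_assoc, Units.mul_inv, one_mul]
    rw [h2]
    exact (Units.isUnit u).mul hc
  rcases isUnit_or_nilpotent hart hnoe hind ((↑u⁻¹ : End Z) * a : End Z) with h | h
  · exact hva h
  · have h1 : (↑u⁻¹ : End Z) * a + (↑u⁻¹ : End Z) * b = 1 := by
      rw [← mul_add, ← hu.unit_spec]
      exact Units.inv_mul u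
    have h2 : (↑u⁻¹ : End Z) * b = 1 - ((↑u⁻¹ : End Z) * a) := by
      rw [← h1]
      exact (add_sub_cancel_left _ _).symm
    have h3 : IsUnit ((↑u⁻¹ : End Z) * b) := by
      rw [h2]
      exact h.isUnit_one_sub
    apply hb
    have h4 : b = (↑u : End Z) * ((↑u⁻¹ : End Z) * b) := by
      rw [← mul_assoc, Units.mul_inv, one_mul]
    rw [h4]
    exact (Units.isUnit u).mul h3

lemma exists_isUnit_of_sum_eq_one {Z : ModuleCat.{u} A} (hart : IsArtinian A Z)
    (hnoe : IsNoetherian A Z) (hind : Indec Z) {κ : Type} [Fintype κ] (v : κ → End Z)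
    (h : ∑ t, v t = 1) : ∃ t, IsUnit (v t) := by
  classical
  by_contra hno
  push_neg at hno
  have key : ∀ s : Finset κ, ¬IsUnit (∑ t ∈ s, v t) := by
    intro s
    induction s using Finset.induction with
    | empty =>
      simp only [Finset.sum_empty]
      intro h0
      exact hind.1 (isUnit_zero_iff.mp h0).symm
    | @insert a s hni ih =>
      rw [Finset.sum_insert hni]
      exact not_isUnit_add hart hnoe hind (hno _) ih
  exact key Finset.univ (h ▸ isUnit_one)

lemma exists_summand_of_mem_addOf_biproduct {n : ℕ} {Ms : ℕ → ModuleCat.{u} A}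
    {Z : ModuleCat.{u} A} (hart : IsArtinian A Z) (hnoe : IsNoetherian A Z) (hind : Indec Z)
    (h : Z ∈ addOf (⨁ (fun j : Fin n => Ms j.1))) : ∃ j : Fin n, IsSummand Z (Ms j.1) := by
  obtain ⟨k, a, b, hab⟩ := sum_of_mem_addOf h
  let v : Fin k × Fin n → End Z := fun t =>
    (a t.1 ≫ biproduct.π (fun j : Fin n => Ms j.1) t.2) ≫
      (biproduct.ι (fun j : Fin n => Ms j.1) t.2 ≫ b t.1)
  have hv : ∑ t, v t = 1 := by
    show (∑ t : Fin k × Fin n, (a t.1 ≫ biproduct.π (fun j : Fin n => Ms j.1) t.2) ≫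
      (biproduct.ι (fun j : Fin n => Ms j.1) t.2 ≫ b t.1)) = 𝟙 Z
    rw [Fintype.sum_prod_type]
    have h1 : ∀ t1 : Fin k, ∑ t2 : Fin n,
        (a t1 ≫ biproduct.π (fun j : Fin n => Ms j.1) t2) ≫
          (biproduct.ι (fun j : Fin n => Ms j.1) t2 ≫ b t1)
        = a t1 ≫ (∑ t2 : Fin n, biproduct.π (fun j : Fin n => Ms j.1) t2 ≫
            biproduct.ι (fun j : Fin n => Ms j.1) t2) ≫ b t1 := by
      intro t1
      rw [Preadditive.sum_comp, Preadditive.comp_sum]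
      simp [Category.assoc]
    calc ∑ t1, ∑ t2, (a t1 ≫ biproduct.π (fun j : Fin n => Ms j.1) t2) ≫
          (biproduct.ι (fun j : Fin n => Ms j.1) t2 ≫ b t1)
        = ∑ t1, a t1 ≫ (∑ t2 : Fin n, biproduct.π (fun j : Fin n => Ms j.1) t2 ≫
            biproduct.ι (fun j : Fin n => Ms j.1) t2) ≫ b t1 :=
          Finset.sum_congr rfl (fun t1 _ => h1 t1)
      _ = ∑ t1, a t1 ≫ b t1 := by rw [biproduct.total]; simp
      _ = 𝟙 Z := hab
  obtain ⟨t, ht⟩ := exists_isUnit_of_sum_eq_one hart hnoe hind v hv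
  refine ⟨t.2, a t.1 ≫ biproduct.π (fun j : Fin n => Ms j.1) t.2,
    (biproduct.ι (fun j : Fin n => Ms j.1) t.2 ≫ b t.1) ≫ (↑ht.unit⁻¹ : End Z), ?_⟩
  rw [← Category.assoc]
  show (v t) ≫ (↑ht.unit⁻¹ : End Z) = 𝟙 Z
  show (↑ht.unit⁻¹ : End Z) * (v t) = 𝟙 Z
  calc (↑ht.unit⁻¹ : End Z) * (v t) = (↑ht.unit⁻¹ : End Z) * ↑ht.unit := by rw [IsUnit.unit_spec]
    _ = 1 := Units.inv_mul _

end Fitting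

/-! ### AR sequence lemmas -/

section ARStep

variable {A : Type u} [Ring A]

lemma ar_no_retraction {X M Y : ModuleCat.{u} A} {f : X ⟶ M} {g : M ⟶ Y}
    (h : IsARSeq f g) (ρ : M ⟶ X) (hρ : f ≫ ρ = 𝟙 X) : False := by
  apply h.nonsplit
  have hepi : Function.Surjective g := (ModuleCat.epi_iff_surjective g).mp h.epi
  set φ : M ⟶ M := 𝟙 M - ρ ≫ f with hφ
  have hfg : ∀ w : X, g (f w) = 0 := fun w => by
    have hw : f w ∈ LinearMap.ker g.hom := h.exact ▸ LinearMap.mem_range_self f.hom w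
    exact LinearMap.mem_ker.mp hw
  have hle : LinearMap.ker g.hom ≤ LinearMap.ker φ.hom := by
    intro x hx
    have hx' : x ∈ LinearMap.range f.hom := h.exact.symm ▸ hx
    obtain ⟨y, rfl⟩ := hx'
    have : φ.hom (f.hom y) = f y - f (ρ (f y)) := rfl
    rw [LinearMap.mem_ker, this]
    have : ρ (f y) = y := ConcreteCategory.congr_hom hρ y
    rw [this, sub_self]
  let e := g.hom.quotKerEquivOfSurjective hepi
  let σ : Y ⟶ M := ModuleCat.ofHom ((Submodule.liftQ (LinearMap.ker g.hom) φ.hom hle).comp e.symm.toLinearMap)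
  refine ⟨σ, ?_⟩
  apply ModuleCat.hom_ext
  apply LinearMap.ext
  intro y
  obtain ⟨x, rfl⟩ := hepi y
  have he : e.symm (g x) = Submodule.Quotient.mk x := by
    apply e.injective
    rw [LinearEquiv.apply_symm_apply]
    rfl
  have hσ : σ (g x) = φ x := by
    show (Submodule.liftQ (LinearMap.ker g.hom) φ.hom hle) (e.symm (g x)) = φ x
    rw [he]
    exact Submodule.liftQ_apply _ _ _
  show g (σ (g x)) = g x
  rw [hσ]
  have : φ x = x - f (ρ x) := rfl
  rw [this, map_sub, hfg, sub_zero]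

lemma exists_factor_through_kernel {X M Y : ModuleCat.{u} A} {f : X ⟶ M} {g : M ⟶ Y}
    (h : IsARSeq f g) {V : ModuleCat.{u} A} (k : V ⟶ M) (hk : k ≫ g = 0) :
    ∃ q : V ⟶ X, q ≫ f = k := by
  have hinj : Function.Injective f := (ModuleCat.mono_iff_injective f).mp h.mono
  have hrange : ∀ v : V, k v ∈ LinearMap.range f.hom := fun v => by
    rw [h.exact, LinearMap.mem_ker]
    exact ConcreteCategory.congr_hom hk v
  let e := LinearEquiv.ofInjective f.hom hinj
  refine ⟨ModuleCat.ofHom (e.symm.toLinearMap.comp (k.hom.codRestrict (LinearMap.range f.hom) hrange)), ?_⟩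
  apply ModuleCat.hom_ext
  apply LinearMap.ext
  intro v
  show f (e.symm ⟨k v, hrange v⟩) = k v
  have : (e (e.symm ⟨k v, hrange v⟩) : M) = ((⟨k v, hrange v⟩ : LinearMap.range f.hom) : M) := by
    rw [LinearEquiv.apply_symm_apply]
  rwa [LinearEquiv.ofInjective_apply] at this

/-- The key step: if the left end `XA` of an AR sequence `A` is a direct summand of the middle
term `MB` of an AR sequence `B`, then the right end `YB` of `B` is a direct summand of the
middle term `MA` of `A`. -/
lemma ar_step {XA MA YA XB MB YB : ModuleCat.{u} A} {fA : XA ⟶ MA} {gA : MA ⟶ YA}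
    {fB : XB ⟶ MB} {gB : MB ⟶ YB} (seqA : IsARSeq fA gA) (seqB : IsARSeq fB gB)
    (hart : IsArtinian A XA) (hnoe : IsNoetherian A XA)
    (hs : IsSummand XA MB) : IsSummand YB MA := by
  obtain ⟨s, p, hsp⟩ := hs
  set h : XA ⟶ YB := s ≫ gB with hh
  -- h is not a split mono
  have hns : ¬∃ r : YB ⟶ XA, h ≫ r = 𝟙 XA := by
    rintro ⟨r, hr⟩
    have he : (r ≫ h) ≫ (r ≫ h) = r ≫ h := by
      calc (r ≫ h) ≫ (r ≫ h) = r ≫ (h ≫ r) ≫ h := by simp [Category.assoc]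
        _ = r ≫ h := by rw [hr, Category.id_comp]
    rcases seqB.indecY.2 (r ≫ h) he with h0 | h1
    · apply seqA.indecX.1
      calc 𝟙 XA = (h ≫ r) ≫ (h ≫ r) := by rw [hr, Category.comp_id]
        _ = h ≫ (r ≫ h) ≫ r := by simp [Category.assoc]
        _ = 0 := by rw [h0, zero_comp, comp_zero]
    · apply seqB.nonsplit
      refine ⟨r ≫ s, ?_⟩
      rw [Category.assoc, ← hh, h1]
  -- extend along fA
  obtain ⟨t, ht⟩ := seqA.extendNonSplitMono h seqB.fgY hns
  -- if t splits we are done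
  by_cases hsplit : ∃ σ : YB ⟶ MA, σ ≫ t = 𝟙 YB
  · obtain ⟨σ, hσ⟩ := hsplit
    exact ⟨σ, t, hσ⟩
  exfalso
  obtain ⟨w, hw⟩ := seqB.liftNonSplitEpi t seqA.fgM hsplit
  have hk : (fA ≫ w - s) ≫ gB = 0 := by
    rw [Preadditive.sub_comp, Category.assoc, hw, ht, hh, sub_self]
  obtain ⟨q, hq⟩ := exists_factor_through_kernel seqB (fA ≫ w - s) hk
  set rmor : XA ⟶ XA := q ≫ (fB ≫ p) with hrmor
  have hr' : fA ≫ (w ≫ p) = 𝟙 XA + rmor := by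
    have h1 : rmor = (q ≫ fB) ≫ p := by rw [hrmor, Category.assoc]
    rw [h1, hq, Preadditive.sub_comp, ← Category.assoc, hsp]
    abel
  -- rmor is not a unit
  have hrnu : ¬IsUnit (endOf rmor) := by
    intro hu
    set rinv : XA ⟶ XA := (↑hu.unit⁻¹ : End XA) with hrinv
    have hri1 : rmor ≫ rinv = 𝟙 XA := by
      have h1 : (↑hu.unit⁻¹ : End XA) * (endOf rmor) = 1 := by
        exact IsUnit.val_inv_mul hu
      exact h1
    have hri2 : rinv ≫ rmor = 𝟙 XA := by
      have h1 : (endOf rmor) * (↑hu.unit⁻¹ : End XA) = 1 := by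
        exact IsUnit.mul_val_inv hu
      exact h1
    set e2 : XB ⟶ XB := fB ≫ (p ≫ (rinv ≫ q)) with he2def
    -- pointwise descriptions
    have happ : ∀ x : XB, e2 x = q (rinv (p (fB x))) := fun _ => rfl
    have hrmapp : ∀ x : XA, rmor x = p (fB (q x)) := fun _ => rfl
    have hmid : ∀ x : XA, rinv (p (fB (q x))) = x := fun x =>
      ConcreteCategory.congr_hom hri1 x
    have he2 : e2 ≫ e2 = e2 := by
      apply ModuleCat.hom_ext
      apply LinearMap.ext
      intro x
      show e2 (e2 x) = e2 x
      exact congrArg q (hmid (rinv (p (fB x))))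
    rcases seqB.indecX.2 e2 he2 with h0 | h1
    · -- e2 = 0 forces 𝟙 XA = 0
      apply seqA.indecX.1
      apply ModuleCat.hom_ext
      apply LinearMap.ext
      intro x
      show x = (0 : XA ⟶ XA) x
      have hq0 : q x = 0 := by
        have h2 : q (rinv (p (fB (q x)))) = e2 (q x) := (happ (q x)).symm
        rw [hmid x] at h2
        rw [h0] at h2
        exact h2.trans rfl
      have h3 : rinv (p (fB (q x))) = x := ConcreteCategory.congr_hom hri1 x
      rw [hq0] at h3
      have h4 : rinv (p (fB (0 : XB))) = 0 := by rw [map_zero, map_zero, map_zero]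
      rw [h4] at h3
      exact h3.symm
    · -- e2 = 𝟙 gives a retraction of fB
      exact ar_no_retraction seqB (p ≫ (rinv ≫ q)) h1
  -- Fitting: rmor is nilpotent, so 𝟙 + rmor is a unit
  have hu2 : IsUnit (endOf (fA ≫ (w ≫ p))) := by
    rcases isUnit_or_nilpotent hart hnoe seqA.indecX rmor with h1 | h1
    · exact absurd h1 hrnu
    · have h2 : endOf (fA ≫ (w ≫ p)) = 1 + endOf rmor := congrArg endOf hr'
      rw [h2]
      exact h1.isUnit_one_add
  set uinv : XA ⟶ XA := (↑hu2.unit⁻¹ : End XA) with huinv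
  have hEq : (fA ≫ (w ≫ p)) ≫ uinv = 𝟙 XA := by
    have h1 : (↑hu2.unit⁻¹ : End XA) * (endOf (fA ≫ (w ≫ p))) = 1 := by
      exact IsUnit.val_inv_mul hu2
    exact h1
  exact ar_no_retraction seqA ((w ≫ p) ≫ uinv) (by rw [← Category.assoc]; exact hEq)

end ARStep

/-! ### finiteness over an Artin algebra, and the chain argument -/

section Chain

variable {A : Type u} [Ring A]

lemma artinian_noetherian_of_finite (R : Type u) [CommRing R] [IsArtinianRing R]
    [Algebra R A] [Module.Finite R A] (Z : ModuleCat.{u} A) (hfin : Module.Finite A Z) :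
    IsArtinian A Z ∧ IsNoetherian A Z := by
  letI : Module R Z := Module.compHom Z (algebraMap R A)
  haveI : IsScalarTower R A Z := ⟨fun r a z => by
    show ((r • a) • z : Z) = algebraMap R A r • (a • z)
    rw [Algebra.smul_def, mul_smul]⟩
  haveI := hfin
  haveI : Module.Finite R Z := Module.Finite.trans A Z
  haveI hRart : IsArtinian R Z := by
    have hfg : (⊤ : Submodule R Z).FG := Module.finite_def.mp inferInstance
    haveI := isArtinian_of_fg_of_artinian _ hfg
    exact isArtinian_of_linearEquiv (Submodule.topEquiv)
  haveI : IsNoetherian R Z := isNoetherian_of_isArtinian' Z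
  exact ⟨isArtinian_of_tower R hRart, isNoetherian_of_tower R inferInstance⟩

lemma chain_aux (R : Type u) [CommRing R] [IsArtinianRing R]
    [Algebra R A] [Module.Finite R A] {n : ℕ} {X Ms : ℕ → ModuleCat.{u} A} {f : ∀ i, X (i + 1) ⟶ Ms i}
    {g : ∀ i, Ms i ⟶ X i} (hAR : ∀ i < n, IsARSeq (f i) (g i)) :
    ∀ j i' : ℕ, i' + 1 ≤ n → j < n → IsSummand (X (i' + 1)) (Ms j) →
      ∃ j' : ℕ, j' < n ∧ IsSummand (X 0) (Ms j') := by
  have stepIdx : ∀ i' j : ℕ, i' + 1 ≤ n → j < n → IsSummand (X (i' + 1)) (Ms j) →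
      IsSummand (X j) (Ms i') := by
    intro i' j hi hj hs
    have seqA := hAR i' (lt_of_lt_of_le (Nat.lt_succ_self i') hi)
    have seqB := hAR j hj
    obtain ⟨hart, hnoe⟩ := artinian_noetherian_of_finite R (X (i' + 1)) seqA.fgX
    exact ar_step seqA seqB hart hnoe hs
  intro j
  induction j with
  | zero =>
    intro i' hi _ hs
    exact ⟨i', lt_of_lt_of_le (Nat.lt_succ_self i') hi, stepIdx i' 0 hi
      (lt_of_lt_of_le (Nat.succ_pos i') hi) hs⟩
  | succ j ih =>
    intro i' hi hj1 hs
    have S1 : IsSummand (X (j + 1)) (Ms i') := stepIdx i' (j + 1) hi hj1 hs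
    have S2 : IsSummand (X i') (Ms j) :=
      stepIdx j i' (le_of_lt hj1) (lt_of_lt_of_le (Nat.lt_succ_self i') hi) S1
    match i', S2 with
    | 0, S2 => exact ⟨j, lt_trans (Nat.lt_succ_self j) hj1, S2⟩
    | i'' + 1, S2 =>
      exact ih i'' (le_of_lt (lt_of_lt_of_le (Nat.lt_succ_self (i'' + 1)) hi))
        (lt_trans (Nat.lt_succ_self j) hj1) S2

lemma X0_mem_addOf (R : Type u) [CommRing R] [IsArtinianRing R]
    [Algebra R A] [Module.Finite R A] {n : ℕ} {X Ms : ℕ → ModuleCat.{u} A} {f : ∀ i, X (i + 1) ⟶ Ms i}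
    {g : ∀ i, Ms i ⟶ X i} (hAR : ∀ i < n, IsARSeq (f i) (g i))
    (hmem : X n ∈ addOf (⨁ (fun i : Fin n => Ms i.1))) :
    X 0 ∈ addOf (⨁ (fun i : Fin n => Ms i.1)) := by
  cases n with
  | zero => exact hmem
  | succ m =>
    have seqTop := hAR m (Nat.lt_succ_self m)
    obtain ⟨hart, hnoe⟩ := artinian_noetherian_of_finite R (X (m + 1)) seqTop.fgX
    obtain ⟨j, hj⟩ := exists_summand_of_mem_addOf_biproduct hart hnoe seqTop.indecX hmem
    obtain ⟨j', hj', hsum⟩ := chain_aux R hAR j.1 m (le_refl (m + 1)) j.2 hj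
    exact summand_mem_addOf hsum (summand_mem_addOf
      (summand_biproduct (fun i : Fin (m + 1) => Ms i.1) ⟨j', hj'⟩) (mem_addOf_self _))

end Chain

/-! ### Morita equivalence from additive equivalence -/

section Morita

variable {A : Type u} [Ring A]

/-- right action of `End U` on `V ⟶ U` by postcomposition -/
instance homEndSMul (U V : ModuleCat.{u} A) : SMul (End U) (V ⟶ U) :=
  ⟨fun r φ => φ ≫ (r : U ⟶ U)⟩

lemma homEndSMul_def {U V : ModuleCat.{u} A} (r : End U) (φ : V ⟶ U) :
    r • φ = φ ≫ (r : U ⟶ U) := rfl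

instance homEndModule (U V : ModuleCat.{u} A) : Module (End U) (V ⟶ U) where
  one_smul φ := Category.comp_id φ
  mul_smul r r' φ := by
    show φ ≫ ((r' : U ⟶ U) ≫ r) = (φ ≫ r') ≫ r
    rw [Category.assoc]
  smul_zero r := Limits.zero_comp
  smul_add r φ ψ := Preadditive.add_comp _ _ _ _ _ _
  add_smul r r' φ := Preadditive.comp_add _ _ _ _ _ _
  zero_smul φ := Limits.comp_zero

/-- precomposition with `s : End V` as an `End U`-linear endomorphism of `V ⟶ U` -/
def precompLinear {U V : ModuleCat.{u} A} (s : End V) : (V ⟶ U) →ₗ[End U] (V ⟶ U) where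
  toFun φ := (s : V ⟶ V) ≫ φ
  map_add' φ ψ := Preadditive.comp_add _ _ _ _ _ _
  map_smul' r φ := (Category.assoc _ _ _).symm

/-- left action of `End V` on `End U`-linear maps out of `V ⟶ U` -/
instance homEndHomModule (U V : ModuleCat.{u} A) (N : Type u) [AddCommGroup N]
    [Module (End U) N] : Module (End V) ((V ⟶ U) →ₗ[End U] N) where
  smul s F := F.comp (precompLinear s)
  one_smul F := LinearMap.ext fun φ => congrArg F (Category.id_comp φ)
  mul_smul s s' F := LinearMap.ext fun φ => by
    show F (((s * s' : End V) : V ⟶ V) ≫ φ) = F ((s' : V ⟶ V) ≫ (s : V ⟶ V) ≫ φ)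
    have h1 : ((s * s' : End V) : V ⟶ V) = (s' : V ⟶ V) ≫ (s : V ⟶ V) := rfl
    rw [h1, Category.assoc]
  smul_zero s := LinearMap.ext fun φ => rfl
  smul_add s F G := LinearMap.ext fun φ => rfl
  add_smul s s' F := LinearMap.ext fun φ => by
    show F (((s + s' : End V) : V ⟶ V) ≫ φ) = F ((s : V ⟶ V) ≫ φ) + F ((s' : V ⟶ V) ≫ φ)
    have h1 : ((s + s' : End V) : V ⟶ V) ≫ φ = (s : V ⟶ V) ≫ φ + (s' : V ⟶ V) ≫ φ :=
      Preadditive.add_comp _ _ _ _ _ _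
    rw [h1, map_add]
  zero_smul F := LinearMap.ext fun φ => by
    show F (((0 : End V) : V ⟶ V) ≫ φ) = 0
    have h1 : ((0 : End V) : V ⟶ V) ≫ φ = 0 := Limits.zero_comp
    rw [h1, map_zero]

lemma homEndHomModule_smul_apply {U V : ModuleCat.{u} A} {N : Type u} [AddCommGroup N]
    [Module (End U) N] (s : End V) (F : (V ⟶ U) →ₗ[End U] N) (φ : V ⟶ U) :
    (s • F) φ = F ((s : V ⟶ V) ≫ φ) := rfl

/-- the functor `Hom(Hom(V,U), -)` between module categories over endomorphism rings -/
def homFunctor (U V : ModuleCat.{u} A) :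
    ModuleCat.{u} (End U) ⥤ ModuleCat.{u} (End V) where
  obj N := ModuleCat.of (End V) ((V ⟶ U) →ₗ[End U] N)
  map {N N'} f :=
    ModuleCat.ofHom
    { toFun := fun F => f.hom.comp F
      map_add' := fun F G => LinearMap.ext fun φ => map_add f.hom _ _
      map_smul' := fun s F => LinearMap.ext fun φ => rfl }
  map_id N := ModuleCat.hom_ext (LinearMap.ext fun F => LinearMap.ext fun φ => rfl)
  map_comp f g := ModuleCat.hom_ext (LinearMap.ext fun F => LinearMap.ext fun φ => rfl)

/-- the unit of the adjunction, at `N` -/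
def unitMap (U V : ModuleCat.{u} A) (N : ModuleCat.{u} (End U)) :
    N →ₗ[End U] ((U ⟶ V) →ₗ[End V] ((V ⟶ U) →ₗ[End U] N)) where
  toFun n :=
    { toFun := fun ψ =>
        { toFun := fun φ => endOf (ψ ≫ φ) • n
          map_add' := fun φ1 φ2 => by
            have h1 : endOf (ψ ≫ (φ1 + φ2)) = endOf (ψ ≫ φ1) + endOf (ψ ≫ φ2) :=
              Preadditive.comp_add _ _ _ _ _ _
            rw [h1, add_smul]
          map_smul' := fun r φ => by
            have h1 : endOf (ψ ≫ (r • φ)) = r * endOf (ψ ≫ φ) := by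
              show ψ ≫ (φ ≫ (r : U ⟶ U)) = (ψ ≫ φ) ≫ (r : U ⟶ U)
              rw [Category.assoc]
            rw [h1, mul_smul]
            rfl }
      map_add' := fun ψ1 ψ2 => LinearMap.ext fun φ => by
        have h1 : endOf ((ψ1 + ψ2) ≫ φ) = endOf (ψ1 ≫ φ) + endOf (ψ2 ≫ φ) :=
          Preadditive.add_comp _ _ _ _ _ _
        show endOf ((ψ1 + ψ2) ≫ φ) • n = endOf (ψ1 ≫ φ) • n + endOf (ψ2 ≫ φ) • n
        rw [h1, add_smul]
      map_smul' := fun s ψ => LinearMap.ext fun φ => by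
        have h1 : endOf ((s • ψ) ≫ φ) = endOf (ψ ≫ ((s : V ⟶ V) ≫ φ)) := by
          show (ψ ≫ (s : V ⟶ V)) ≫ φ = ψ ≫ ((s : V ⟶ V) ≫ φ)
          rw [Category.assoc]
        show endOf ((s • ψ) ≫ φ) • n = endOf (ψ ≫ ((s : V ⟶ V) ≫ φ)) • n
        rw [h1] }
  map_add' n1 n2 := LinearMap.ext fun ψ => LinearMap.ext fun φ => smul_add _ _ _
  map_smul' r n := LinearMap.ext fun ψ => LinearMap.ext fun φ => by
    have h1 : endOf (((r : U ⟶ U) ≫ ψ) ≫ φ) = endOf (ψ ≫ φ) * r := by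
      show ((r : U ⟶ U) ≫ ψ) ≫ φ = (r : U ⟶ U) ≫ (ψ ≫ φ)
      rw [Category.assoc]
    show endOf (ψ ≫ φ) • (r • n) = endOf (((r : U ⟶ U) ≫ ψ) ≫ φ) • n
    rw [h1, mul_smul]

end Morita

section Morita2

variable {A : Type u} [Ring A]

lemma unitMap_bijective (U V : ModuleCat.{u} A)
    {k : ℕ} (a : Fin k → (U ⟶ V)) (b : Fin k → (V ⟶ U)) (hab : ∑ t, a t ≫ b t = 𝟙 U)
    (N : ModuleCat.{u} (End U)) : Function.Bijective (unitMap U V N) := by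
  set θ : ((U ⟶ V) →ₗ[End V] ((V ⟶ U) →ₗ[End U] N)) → N := fun Φ => ∑ t, Φ (a t) (b t) with hθ
  have hleft : ∀ n : N, θ (unitMap U V N n) = n := by
    intro n
    show (∑ t, endOf (a t ≫ b t) • n) = n
    rw [← Finset.sum_smul]
    have h1 : (∑ t, endOf (a t ≫ b t)) = (1 : End U) := hab
    rw [h1, one_smul]
  have hright : ∀ Φ, unitMap U V N (θ Φ) = Φ := by
    intro Φ
    apply LinearMap.ext; intro ψ; apply LinearMap.ext; intro φ
    show endOf (ψ ≫ φ) • (∑ t, Φ (a t) (b t)) = Φ ψ φ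
    rw [Finset.smul_sum]
    have h2 : ∀ t, endOf (ψ ≫ φ) • (Φ (a t) (b t)) = Φ (a t) (b t ≫ (ψ ≫ φ)) := fun t =>
      ((Φ (a t)).map_smul (endOf (ψ ≫ φ)) (b t)).symm
    have h3 : ψ = ∑ t, endOf (b t ≫ ψ) • a t := by
      have : ∑ t, a t ≫ (b t ≫ ψ) = ψ := by
        have h4 : ∀ t : Fin k, a t ≫ (b t ≫ ψ) = (a t ≫ b t) ≫ ψ :=
          fun t => (Category.assoc _ _ _).symm
        rw [Finset.sum_congr rfl (fun t _ => h4 t), ← Preadditive.sum_comp, hab,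
          Category.id_comp]
      exact this.symm
    have h5 : Φ ψ φ = ∑ t, Φ (a t) ((b t ≫ ψ) ≫ φ) := by
      conv_lhs => rw [h3]
      rw [map_sum]
      have h6 : ∀ t : Fin k, Φ (endOf (b t ≫ ψ) • a t) = endOf (b t ≫ ψ) • Φ (a t) :=
        fun t => Φ.map_smul _ _
      rw [Finset.sum_congr rfl (fun t _ => h6 t), LinearMap.sum_apply]
      rfl
    rw [Finset.sum_congr rfl (fun t _ => h2 t), h5]
    exact Finset.sum_congr rfl (fun t _ => by rw [Category.assoc])
  exact ⟨Function.LeftInverse.injective hleft, Function.RightInverse.surjective hright⟩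

/-- the unit isomorphism -/
noncomputable def unitIso (U V : ModuleCat.{u} A)
    {k : ℕ} (a : Fin k → (U ⟶ V)) (b : Fin k → (V ⟶ U)) (hab : ∑ t, a t ≫ b t = 𝟙 U) :
    𝟭 (ModuleCat.{u} (End U)) ≅ homFunctor U V ⋙ homFunctor V U :=
  NatIso.ofComponents
    (fun N =>
      { hom := ModuleCat.ofHom (unitMap U V N)
        inv := ModuleCat.ofHom (LinearEquiv.ofBijective (unitMap U V N)
          (unitMap_bijective U V a b hab N)).symm.toLinearMap
        hom_inv_id := ModuleCat.hom_ext (LinearMap.ext fun n =>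
          (LinearEquiv.ofBijective (unitMap U V N)
            (unitMap_bijective U V a b hab N)).symm_apply_apply n)
        inv_hom_id := ModuleCat.hom_ext (LinearMap.ext fun Φ =>
          (LinearEquiv.ofBijective (unitMap U V N)
            (unitMap_bijective U V a b hab N)).apply_symm_apply Φ) })
    (fun {N N0} f => ModuleCat.hom_ext (LinearMap.ext fun n => LinearMap.ext fun ψ => LinearMap.ext fun φ =>
      (map_smul f.hom _ n).symm))

/-- the Morita equivalence coming from mutual `addOf` membership -/
lemma morita_nonempty (U V : ModuleCat.{u} A)
    (hU : U ∈ addOf V) (hV : V ∈ addOf U) :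
    Nonempty (ModuleCat.{u} (End U) ≌ ModuleCat.{u} (End V)) := by
  obtain ⟨k, a, b, hab⟩ := sum_of_mem_addOf hU
  obtain ⟨l, c, d, hcd⟩ := sum_of_mem_addOf hV
  exact ⟨CategoryTheory.Equivalence.mk (homFunctor U V) (homFunctor V U)
    (unitIso U V a b hab) ((unitIso V U c d hcd).symm)⟩

end Morita2


open CategoryTheory Limits in
/-- For a chain of Auslander-Reiten sequences `0 → X_{i+1} → M_i → X_i → 0` (`i < n`)
with `M = ⊕ M_i`: if `X_n ∈ add M` then `X_0 ∈ add M`,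
`add (M ⊕ X_n) = add M = add (M ⊕ X_0)`, and `End (M ⊕ X_n)`, `End (M ⊕ X_0)`
are Morita equivalent. -/
theorem morita_of_ARSeq_chain {R : Type u} [CommRing R] [IsArtinianRing R] {A : Type u} [Ring A] [Algebra R A]
    [Module.Finite R A]
    (n : ℕ) (X : ℕ → ModuleCat.{u} A) (Ms : ℕ → ModuleCat.{u} A)
    (f : ∀ i : ℕ, X (i + 1) ⟶ Ms i) (g : ∀ i : ℕ, Ms i ⟶ X i)
    (hAR : ∀ i < n, IsARSeq (f i) (g i))
    (hmem : X n ∈ addOf (⨁ (fun i : Fin n => Ms i.1))) :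
    X 0 ∈ addOf (⨁ (fun i : Fin n => Ms i.1)) ∧
    addOf ((⨁ (fun i : Fin n => Ms i.1)) ⊞ X n) = addOf (⨁ (fun i : Fin n => Ms i.1)) ∧
    addOf ((⨁ (fun i : Fin n => Ms i.1)) ⊞ X 0) = addOf (⨁ (fun i : Fin n => Ms i.1)) ∧
    MoritaEq (End ((⨁ (fun i : Fin n => Ms i.1)) ⊞ X n))
      (End ((⨁ (fun i : Fin n => Ms i.1)) ⊞ X 0)) := by
  have hX0 : X 0 ∈ addOf (⨁ (fun i : Fin n => Ms i.1)) := X0_mem_addOf R hAR hmem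
  have h1 : addOf ((⨁ (fun i : Fin n => Ms i.1)) ⊞ X n) = addOf (⨁ (fun i : Fin n => Ms i.1)) :=
    addOf_biprod_eq hmem
  have h2 : addOf ((⨁ (fun i : Fin n => Ms i.1)) ⊞ X 0) = addOf (⨁ (fun i : Fin n => Ms i.1)) :=
    addOf_biprod_eq hX0
  refine ⟨hX0, h1, h2, ?_⟩
  have hUB : ((⨁ (fun i : Fin n => Ms i.1)) ⊞ X n) ∈ addOf (⨁ (fun i : Fin n => Ms i.1)) :=
    biprod_mem_addOf (mem_addOf_self _) hmem
  have hVB : ((⨁ (fun i : Fin n => Ms i.1)) ⊞ X 0) ∈ addOf (⨁ (fun i : Fin n => Ms i.1)) :=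
    biprod_mem_addOf (mem_addOf_self _) hX0
  have hBU : (⨁ (fun i : Fin n => Ms i.1)) ∈ addOf ((⨁ (fun i : Fin n => Ms i.1)) ⊞ X n) :=
    summand_mem_addOf (biprod_fst_summand _ _) (mem_addOf_self _)
  have hBV : (⨁ (fun i : Fin n => Ms i.1)) ∈ addOf ((⨁ (fun i : Fin n => Ms i.1)) ⊞ X 0) :=
    summand_mem_addOf (biprod_fst_summand _ _) (mem_addOf_self _)
  exact morita_nonempty _ _ (addOf_trans hUB hBV) (addOf_trans hVB hBU)
end
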